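/- In an augmented tree (X, 𝓔) induced by a map Φ satisfying (A1) and (A2), there exists a constant L > 0 (depending only on d, δ₀, r, κ) such that every horizontal geodesic of (X, 𝓔) has length at most L. -/

import Mathlib

open Metric Filter

namespace HypIFS

/-- A rooted tree: a connected, locally finite simple graph with no cycles
and a distinguished root. -/
structure RootedTree (X : Type*) where
  G : SimpleGraph X
  isTree : G.IsTree
  locFin : ∀ x : X, {y | G.Adj x y}.Finite
  root : X

variable {X : Type*}

/-- the level `|x|` of a vertex: graph distance from the root. -/
noncomputable def lvl (T : RootedTree X) (x : X) : ℕ := T.G.dist T.root x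

/-- `p` is the parent `x⁻¹` of `x`. -/
def IsParent (T : RootedTree X) (p x : X) : Prop :=
  T.G.Adj p x ∧ lvl T p + 1 = lvl T x

/-- The graph `(X, 𝓔_v ∪ 𝓔_h)`. -/
def augGraph (T : RootedTree X) (Eh : X → X → Prop) : SimpleGraph X where
  Adj x y := (T.G.Adj x y ∨ Eh x y ∨ Eh y x) ∧ x ≠ y
  symm := by
    constructor
    rintro x y ⟨h1 | h2 | h3, hne⟩
    · exact ⟨Or.inl h1.symm, hne.symm⟩
    · exact ⟨Or.inr (Or.inr h2), hne.symm⟩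
    · exact ⟨Or.inr (Or.inl h3), hne.symm⟩
  loopless := ⟨fun x h => h.2 rfl⟩

/-- The Gromov product `|x ∧ y| = ½(|x| + |y| − d(x,y))` with respect to a root `o`. -/
noncomputable def gprod {V : Type*} (G : SimpleGraph V) (o x y : V) : ℝ :=
  ((G.dist o x : ℝ) + (G.dist o y : ℝ) - (G.dist x y : ℝ)) / 2

/-- Gromov hyperbolicity of a graph with basepoint `o`. -/
def GromovHyperbolic {V : Type*} (G : SimpleGraph V) (o : V) : Prop :=
  ∃ δ : ℝ, 0 ≤ δ ∧ ∀ x y z : V,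
    min (gprod G o x z) (gprod G o z y) - δ ≤ gprod G o x y

/-- The distance `dist(A, B)` between two subsets of a metric space. -/
noncomputable def setDist {E : Type*} [PseudoMetricSpace E] (A B : Set E) : ℝ :=
  sInf (Set.image2 dist A B)

/-- The horizontal edge set `𝓔_h` induced by the set-valued map `Φ`:
`(x,y) ∈ 𝓔_h` iff `|x| = |y|`, `x ≠ y` and `dist(Φ(x), Φ(y)) ≤ κ r^{|x|}`. -/
def EhPhi {d : ℕ} (T : RootedTree X) (Φ : X → Set (EuclideanSpace ℝ (Fin d)))
    (r κ : ℝ) (x y : X) : Prop :=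
  lvl T x = lvl T y ∧ x ≠ y ∧ setDist (Φ x) (Φ y) ≤ κ * r ^ lvl T x

/-- `w 0, w 1, …, w n` is a horizontal geodesic of length `n` in the graph
`(X, 𝓔_v ∪ 𝓔_h)`: consecutive vertices joined by horizontal edges, all vertices
in one level, and the path has minimal length. -/
def IsHorizGeodesic (T : RootedTree X) (Eh : X → X → Prop) (n : ℕ) (w : ℕ → X) : Prop :=
  (∀ i < n, Eh (w i) (w (i + 1)) ∧ w i ≠ w (i + 1)) ∧
  (∀ i ≤ n, lvl T (w i) = lvl T (w 0)) ∧
  (augGraph T Eh).dist (w 0) (w n) = n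

-- Auxiliary lemmas
lemma lvl_root (T : RootedTree X) : lvl T T.root = 0 := by
  simp [lvl]

lemma eq_root_of_lvl_eq_zero (T : RootedTree X) {x : X} (h : lvl T x = 0) : x = T.root :=
  ((T.isTree.isConnected.dist_eq_zero_iff).mp h).symm

lemma exists_parent (T : RootedTree X) {x : X} (h : 0 < lvl T x) : ∃ p, IsParent T p x := by
  obtain ⟨p, hp⟩ := T.isTree.isConnected.exists_walk_length_eq_dist T.root x
  have hne : x ≠ T.root := by
    rintro rfl; rw [lvl_root] at h; exact lt_irrefl 0 h
  obtain ⟨y, hadj, q, hq⟩ := SimpleGraph.Walk.exists_eq_cons_of_ne hne p.reverse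
  refine ⟨y, hadj.symm, ?_⟩
  have hlen : q.length + 1 = lvl T x := by
    have h2 := congrArg SimpleGraph.Walk.length hq
    simp only [SimpleGraph.Walk.length_reverse, SimpleGraph.Walk.length_cons] at h2
    rw [hp] at h2
    exact h2.symm
  have h1 : lvl T y ≤ q.length := by
    have := SimpleGraph.dist_le q.reverse
    simpa [lvl, SimpleGraph.Walk.length_reverse] using this
  have h3 : lvl T x ≤ lvl T y + 1 := by
    obtain ⟨p2, hp2⟩ := T.isTree.isConnected.exists_walk_length_eq_dist T.root y
    have := SimpleGraph.dist_le (p2.concat hadj.symm)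
    simpa [lvl, SimpleGraph.Walk.length_concat, hp2] using this
  omega

lemma exists_ancestor {d : ℕ} (T : RootedTree X) (Φ : X → Set (EuclideanSpace ℝ (Fin d)))
    (hmono : ∀ p x, IsParent T p x → Φ x ⊆ Φ p) (Eh : X → X → Prop)
    (x : X) (k : ℕ) (hk : k ≤ lvl T x) :
    ∃ u, lvl T u = lvl T x - k ∧ Φ x ⊆ Φ u ∧
      ∃ p : (augGraph T Eh).Walk x u, p.length = k := by
  induction k with
  | zero => exact ⟨x, by simp, subset_rfl, SimpleGraph.Walk.nil, rfl⟩
  | succ k ih =>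
    obtain ⟨u, hu, hsub, p, hp⟩ := ih (Nat.le_of_succ_le hk)
    have hpos : 0 < lvl T u := by omega
    obtain ⟨q, hq⟩ := exists_parent T hpos
    have hq2 := hq.2
    have hadj : (augGraph T Eh).Adj u q := And.intro (Or.inl hq.1.symm) hq.1.ne'
    refine ⟨q, by omega, hsub.trans (hmono q u hq), p.concat hadj, ?_⟩
    simp [SimpleGraph.Walk.length_concat, hp]

lemma setDist_le_dist {E : Type*} [PseudoMetricSpace E] {A B : Set E} {a b : E}
    (ha : a ∈ A) (hb : b ∈ B) : setDist A B ≤ dist a b :=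
  csInf_le ⟨0, fun t ht => by
    obtain ⟨u, hu, v, hv, rfl⟩ := ht; exact dist_nonneg⟩ (Set.mem_image2_of_mem ha hb)

lemma exists_dist_lt {E : Type*} [PseudoMetricSpace E] {A B : Set E}
    (hA : A.Nonempty) (hB : B.Nonempty) {c ε : ℝ} (h : setDist A B ≤ c) (hε : 0 < ε) :
    ∃ a ∈ A, ∃ b ∈ B, dist a b < c + ε := by
  have hne : (Set.image2 dist A B).Nonempty := Set.Nonempty.image2 hA hB
  have hlt : sInf (Set.image2 dist A B) < c + ε := lt_of_le_of_lt h (by linarith)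
  obtain ⟨t, ht, htlt⟩ := exists_lt_of_csInf_lt hne hlt
  obtain ⟨a, ha, b, hb, rfl⟩ := ht
  exact ⟨a, ha, b, hb, htlt⟩

lemma eventually_linear_le_pow {s C : ℝ} (hs : 1 < s) (hC : 0 < C) :
    ∃ N : ℕ, 3 ≤ N ∧ ∀ n : ℕ, N ≤ n → C * n ≤ s ^ ((n - 2) / 2) := by
  set t := Real.sqrt s with hts
  have hs0 : (0:ℝ) ≤ s := by linarith
  have ht1 : 1 < t := by
    rw [hts, show (1:ℝ) = Real.sqrt 1 by simp]
    exact Real.sqrt_lt_sqrt (by norm_num) hs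
  have ht2 : t ^ 2 = s := Real.sq_sqrt hs0
  have hbern : ∀ k : ℕ, (k : ℝ) * (t - 1) ≤ t ^ k := by
    intro k
    have := one_add_mul_le_pow (a := t - 1) (by linarith) k
    rw [show 1 + (t - 1) = t by ring] at this
    linarith
  obtain ⟨K, hK⟩ := eventually_atTop.mp
    (tendsto_atTop.mp (tendsto_pow_atTop_atTop_of_one_lt ht1) (5 * C / (t - 1)))
  refine ⟨max (2 * K + 2) 4, le_trans (by norm_num) (le_max_right _ _), ?_⟩
  intro n hn
  have hn1 : 2 * K + 2 ≤ n := le_trans (le_max_left _ _) hn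
  have hn2 : 4 ≤ n := le_trans (le_max_right _ _) hn
  set k := (n - 2) / 2 with hk
  have hkK : K ≤ k := by omega
  have h5 : 5 * C / (t - 1) ≤ t ^ k := hK k hkK
  have hb := hbern k
  have htk : (0 : ℝ) < t ^ k := pow_pos (by linarith) k
  have hsk : s ^ k = t ^ k * t ^ k := by rw [← ht2, ← pow_mul, two_mul, pow_add]
  have hn5 : (n : ℝ) ≤ 5 * k := by exact_mod_cast (show n ≤ 5 * k by omega)
  have ht1' : (0 : ℝ) < t - 1 := by linarith
  have key : 5 * C * k ≤ s ^ k := by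
    calc 5 * C * k = (5 * C / (t - 1)) * ((k : ℝ) * (t - 1)) := by field_simp
      _ ≤ t ^ k * t ^ k := mul_le_mul h5 hb (by positivity) (le_of_lt htk)
      _ = s ^ k := hsk.symm
  nlinarith

/-- In an augmented tree induced by a map `Φ` satisfying (A1) and (A2), there is
a constant `L > 0` depending only on `d, δ₀, r, κ` bounding the length of every
horizontal geodesic. -/
theorem horizontal_geodesics_bounded (d : ℕ) (δ₀ r κ : ℝ)
    (hδ₀ : 1 < δ₀) (hr0 : 0 < r) (hr1 : r < 1) (hκ : 0 < κ) :
    ∃ L : ℕ, 0 < L ∧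
      ∀ (X : Type) (T : RootedTree X) (Φ : X → Set (EuclideanSpace ℝ (Fin d))),
        (∀ x, IsCompact (Φ x)) → (∀ x, (Φ x).Nonempty) →
        (∀ p x, IsParent T p x → Φ x ⊆ Φ p) →
        (∀ x, δ₀⁻¹ * r ^ lvl T x ≤ diam (Φ x) ∧ diam (Φ x) ≤ δ₀ * r ^ lvl T x) →
        ∀ (n : ℕ) (w : ℕ → X), IsHorizGeodesic T (EhPhi T Φ r κ) n w → n ≤ L := by
  have h1s : 1 < 1 / r := one_lt_one_div hr0 hr1
  have hCpos : 0 < (κ + δ₀) / κ := by positivity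
  obtain ⟨N, hN3, hN⟩ := eventually_linear_le_pow h1s hCpos
  refine ⟨N, by omega, ?_⟩
  intro X T Φ hcomp hnon hmono hdiam n w hgeo
  by_contra hcon
  push_neg at hcon
  obtain ⟨hEh, hlvl, hdist⟩ := hgeo
  set Eh := EhPhi T Φ r κ with hEhdef
  set m := lvl T (w 0) with hm
  have hnpos : 0 < n := by omega
  -- chain of points
  have chain : ∀ ε > 0, ∀ j ≤ n, ∃ a ∈ Φ (w 0), ∃ b ∈ Φ (w j),
      dist a b ≤ j * ((κ + δ₀) * r ^ m + ε) := by
    intro ε hε j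
    induction j with
    | zero =>
      intro _
      obtain ⟨a, ha⟩ := hnon (w 0)
      exact ⟨a, ha, a, ha, by simp⟩
    | succ j ih =>
      intro hj
      obtain ⟨a, ha, b, hb, hab⟩ := ih (by omega)
      have hEdge := (hEh j (by omega)).1
      have hsd : setDist (Φ (w j)) (Φ (w (j + 1))) ≤ κ * r ^ m := by
        have h2 := hEdge.2.2
        rwa [hlvl j (by omega)] at h2
      obtain ⟨a', ha', b', hb', hab'⟩ := exists_dist_lt (hnon _) (hnon _) hsd hε
      have hdj : dist b a' ≤ δ₀ * r ^ m := by
        refine le_trans (dist_le_diam_of_mem (hcomp _).isBounded hb ha') ?_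
        have h3 := (hdiam (w j)).2
        rwa [hlvl j (by omega)] at h3
      refine ⟨a, ha, b', hb', ?_⟩
      calc dist a b' ≤ dist a b + dist b a' + dist a' b' := dist_triangle4 a b a' b'
        _ ≤ j * ((κ + δ₀) * r ^ m + ε) + δ₀ * r ^ m + (κ * r ^ m + ε) := by linarith
        _ = (j + 1 : ℕ) * ((κ + δ₀) * r ^ m + ε) := by push_cast; ring
  have hlvln : lvl T (w n) = m := hlvl n le_rfl
  by_cases hkm : (n - 2) / 2 ≤ m
  · -- ancestors at level m - k, k = (n-2)/2
    set k := (n - 2) / 2 with hkdef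
    obtain ⟨u0, hu0l, hu0s, p0, hp0⟩ := exists_ancestor T Φ hmono Eh (w 0) k (by omega)
    obtain ⟨un, hunl, huns, pn, hpn⟩ := exists_ancestor T Φ hmono Eh (w n) k (by omega)
    rw [← hm] at hu0l
    rw [hlvln] at hunl
    by_cases hequ : u0 = un
    · have hd2 : (augGraph T Eh).dist (w 0) (w n) ≤ 2 * k := by
        refine le_trans (SimpleGraph.dist_le (p0.append ((pn.reverse).copy hequ.symm rfl))) ?_
        simp [SimpleGraph.Walk.length_append, SimpleGraph.Walk.length_copy,
          SimpleGraph.Walk.length_reverse, hp0, hpn]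
        omega
      omega
    · -- horizontal edge between ancestors
      have hsdu : setDist (Φ u0) (Φ un) ≤ n * ((κ + δ₀) * r ^ m) := by
        refine le_of_forall_pos_le_add ?_
        intro ε hε
        have hεn : 0 < ε / n := by positivity
        obtain ⟨a, ha, b, hb, hab⟩ := chain (ε / n) hεn n le_rfl
        refine le_trans (setDist_le_dist (hu0s ha) (huns hb)) (le_trans hab (le_of_eq ?_))
        have hn0 : (n : ℝ) ≠ 0 := Nat.cast_ne_zero.mpr (by omega)
        field_simp
      have hkey : (n : ℝ) * ((κ + δ₀) * r ^ m) ≤ κ * r ^ (m - k) := by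
        have h1 : ((κ + δ₀) / κ) * n ≤ (1 / r) ^ k := hN n (by omega)
        have hrm : r ^ m = r ^ (m - k) * r ^ k := by
          rw [← pow_add]; congr 1; omega
        have hrk : (0 : ℝ) < r ^ k := pow_pos hr0 k
        have hrmk : (0 : ℝ) < r ^ (m - k) := pow_pos hr0 _
        have h2 := mul_le_mul_of_nonneg_right h1
          (show (0:ℝ) ≤ κ * (r ^ k * r ^ (m - k)) by positivity)
        calc (n : ℝ) * ((κ + δ₀) * r ^ m)
            = ((κ + δ₀) / κ) * n * (κ * (r ^ k * r ^ (m - k))) := by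
              rw [hrm]; field_simp
          _ ≤ (1 / r) ^ k * (κ * (r ^ k * r ^ (m - k))) := h2
          _ = κ * r ^ (m - k) := by
              rw [div_pow, one_pow]
              field_simp
      have hEhu : Eh u0 un := by
        refine ⟨by rw [hu0l, hunl], hequ, ?_⟩
        rw [hu0l]
        exact le_trans hsdu hkey
      have hadj : (augGraph T Eh).Adj u0 un := And.intro (Or.inr (Or.inl hEhu)) hequ
      have hd2 : (augGraph T Eh).dist (w 0) (w n) ≤ 2 * k + 1 := by
        refine le_trans
          (SimpleGraph.dist_le (p0.append (SimpleGraph.Walk.cons hadj pn.reverse))) ?_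
        simp [SimpleGraph.Walk.length_append, SimpleGraph.Walk.length_cons,
          SimpleGraph.Walk.length_reverse, hp0, hpn]
        omega
      omega
  · -- go all the way to the root
    obtain ⟨u0, hu0l, _, p0, hp0⟩ := exists_ancestor T Φ hmono Eh (w 0) m (by omega)
    obtain ⟨un, hunl, _, pn, hpn⟩ := exists_ancestor T Φ hmono Eh (w n) m (by omega)
    rw [← hm] at hu0l
    rw [hlvln] at hunl
    have h0 : u0 = T.root := eq_root_of_lvl_eq_zero T (by omega)
    have h1 : un = T.root := eq_root_of_lvl_eq_zero T (by omega)
    have hequ : u0 = un := h0.trans h1.symm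
    have hd2 : (augGraph T Eh).dist (w 0) (w n) ≤ 2 * m := by
      refine le_trans (SimpleGraph.dist_le (p0.append ((pn.reverse).copy hequ.symm rfl))) ?_
      simp [SimpleGraph.Walk.length_append, SimpleGraph.Walk.length_copy,
        SimpleGraph.Walk.length_reverse, hp0, hpn]
      omega
    omega

end HypIFS
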